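/- The functions J̃_{0i} = R_i/√(−2H) (defined where H < 0) together with J_{ij} close the Lie–Poisson algebra so(N+1): in particular {R_i, R_j} = −2 H J_{ij} and {J_{ij}, R_k} = δ_{ik}R_j − δ_{jk}R_i. -/

import Mathlib

open Filter

/-- Euclidean norm of a point of ℝᴺ. -/
noncomputable def nrm {N : ℕ} (q : Fin N → ℝ) : ℝ := Real.sqrt (∑ i, q i ^ 2)

/-- The canonical Poisson bracket {F,G} = Σᵢ (∂F/∂qᵢ ∂G/∂pᵢ − ∂F/∂pᵢ ∂G/∂qᵢ)
on phase space ℝᴺ × ℝᴺ, evaluated at a point `x = (q,p)`. -/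
noncomputable def pbracket {N : ℕ}
    (F G : (Fin N → ℝ) × (Fin N → ℝ) → ℝ)
    (x : (Fin N → ℝ) × (Fin N → ℝ)) : ℝ :=
  ∑ i : Fin N,
    (deriv (fun t => F (Function.update x.1 i t, x.2)) (x.1 i) *
       deriv (fun t => G (x.1, Function.update x.2 i t)) (x.2 i) -
     deriv (fun t => F (x.1, Function.update x.2 i t)) (x.2 i) *
       deriv (fun t => G (Function.update x.1 i t, x.2)) (x.1 i))

/-- Angular momentum component J_{ij} = qᵢ pⱼ − qⱼ pᵢ. -/
def J {N : ℕ} (i j : Fin N) (x : (Fin N → ℝ) × (Fin N → ℝ)) : ℝ :=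
  x.1 i * x.2 j - x.1 j * x.2 i

/-- The deformed Coulomb Hamiltonian H = |q| p² / (2(η+|q|)) − k/(η+|q|). -/
noncomputable def Ham {N : ℕ} (η k : ℝ)
    (x : (Fin N → ℝ) × (Fin N → ℝ)) : ℝ :=
  nrm x.1 * (∑ i, x.2 i ^ 2) / (2 * (η + nrm x.1)) - k / (η + nrm x.1)

/-- The i-th component of the deformed Runge–Lenz vector. -/
noncomputable def RL {N : ℕ} (η k : ℝ) (i : Fin N)
    (x : (Fin N → ℝ) × (Fin N → ℝ)) : ℝ :=
  (∑ j, x.2 j * (x.1 j * x.2 i - x.1 i * x.2 j)) +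
    x.1 i / nrm x.1 * (η * Ham η k x + k)


lemma nrm_pos {N : ℕ} {q : Fin N → ℝ} (hq : q ≠ 0) : 0 < nrm q := by
  obtain ⟨i, hi⟩ := Function.ne_iff.1 hq
  exact Real.sqrt_pos.2 (Finset.sum_pos' (fun j _ => sq_nonneg _)
    ⟨i, Finset.mem_univ i, (sq_nonneg (q i)).lt_of_ne (Ne.symm (pow_ne_zero 2 hi))⟩)

lemma nrm_sq {N : ℕ} (q : Fin N → ℝ) : nrm q ^ 2 = ∑ i, q i ^ 2 :=
  Real.sq_sqrt (Finset.sum_nonneg fun _ _ => sq_nonneg _)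

lemma update_hasDerivAt {N : ℕ} (f : Fin N → ℝ) (m a : Fin N) (t0 : ℝ) :
    HasDerivAt (fun t => Function.update f m t a) (if a = m then 1 else 0) t0 := by
  rcases eq_or_ne a m with h | h
  · subst h; simpa using (hasDerivAt_id' t0)
  · simpa [Function.update_of_ne h, h] using hasDerivAt_const t0 (f a)

lemma hasDerivAt_nrm_update {N : ℕ} {q : Fin N → ℝ} (hq : q ≠ 0) (m : Fin N) :
    HasDerivAt (fun t => nrm (Function.update q m t)) (q m / nrm q) (q m) := by
  have hsum : ∀ t, ∑ i, (Function.update q m t i) ^ 2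
      = t ^ 2 + ∑ i ∈ Finset.univ.erase m, q i ^ 2 := by
    intro t
    rw [← Finset.add_sum_erase _ _ (Finset.mem_univ m)]
    congr 1
    · simp
    · exact Finset.sum_congr rfl fun i hi => by
        rw [Function.update_of_ne (Finset.ne_of_mem_erase hi)]
  have hpos : (0:ℝ) < q m ^ 2 + ∑ i ∈ Finset.univ.erase m, q i ^ 2 := by
    rw [← hsum (q m)]
    simp only [Function.update_eq_self]
    have := nrm_pos hq
    nlinarith [nrm_sq q]
  have h1 : HasDerivAt (fun t : ℝ => t ^ 2 + ∑ i ∈ Finset.univ.erase m, q i ^ 2)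
      (2 * q m) (q m) := by
    simpa using ((hasDerivAt_pow 2 (q m)).add_const (∑ i ∈ Finset.univ.erase m, q i ^ 2))
  have h2 := (Real.hasDerivAt_sqrt (ne_of_gt hpos)).comp (q m) h1
  have heq : nrm q = Real.sqrt (q m ^ 2 + ∑ i ∈ Finset.univ.erase m, q i ^ 2) := by
    rw [nrm, ← hsum (q m)]; simp
  have : HasDerivAt (fun t => nrm (Function.update q m t))
      (1 / (2 * Real.sqrt (q m ^ 2 + ∑ i ∈ Finset.univ.erase m, q i ^ 2)) * (2 * q m))
      (q m) := by
    refine HasDerivAt.congr_of_eventuallyEq h2 ?_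
    filter_upwards with t
    simp [nrm, hsum t, Function.comp]
  convert this using 1
  rw [← heq]
  have hr := (nrm_pos hq).ne'
  field_simp

lemma Ham_q_hasDerivAt {N : ℕ} (η k : ℝ) (x : (Fin N → ℝ) × (Fin N → ℝ))
    (hq : x.1 ≠ 0) (hd : η + nrm x.1 ≠ 0) (m : Fin N) :
    HasDerivAt (fun t => Ham η k (Function.update x.1 m t, x.2))
      (x.1 m / nrm x.1 * (η * (∑ i, x.2 i ^ 2) / 2 + k) / (η + nrm x.1) ^ 2)
      (x.1 m) := by
  have hn := hasDerivAt_nrm_update hq m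
  have h1 : HasDerivAt (fun t => η + nrm (Function.update x.1 m t))
      (x.1 m / nrm x.1) (x.1 m) := hn.const_add η
  have hval : Function.update x.1 m (x.1 m) = x.1 := Function.update_eq_self m x.1
  have hd1 : 2 * (η + nrm (Function.update x.1 m (x.1 m))) ≠ 0 := by
    rw [hval]; exact mul_ne_zero two_ne_zero hd
  have hd2 : η + nrm (Function.update x.1 m (x.1 m)) ≠ 0 := by rw [hval]; exact hd
  have h2 := (hn.mul_const (∑ i, x.2 i ^ 2)).div (h1.const_mul 2) hd1
  have h3 := (hasDerivAt_const (x.1 m) k).div h1 hd2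
  have h4 := h2.sub h3
  simp only [Ham]
  convert h4 using 1
  · rfl
  · rfl
  · rfl
  simp only [hval]
  have hr := (nrm_pos hq).ne'
  field_simp
  ring

lemma Ham_p_hasDerivAt {N : ℕ} (η k : ℝ) (x : (Fin N → ℝ) × (Fin N → ℝ))
    (hd : η + nrm x.1 ≠ 0) (m : Fin N) :
    HasDerivAt (fun t => Ham η k (x.1, Function.update x.2 m t))
      (nrm x.1 * x.2 m / (η + nrm x.1)) (x.2 m) := by
  have hsum : HasDerivAt (fun t => ∑ i, (Function.update x.2 m t i) ^ 2)
      (2 * x.2 m) (x.2 m) := by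
    have h := HasDerivAt.fun_sum (u := Finset.univ)
      (A := fun i t => (Function.update x.2 m t i) ^ 2)
      (A' := fun i => 2 * (Function.update x.2 m (x.2 m) i) ^ 1 * (if i = m then 1 else 0))
      (fun i _ => by
        simpa using (update_hasDerivAt x.2 m i (x.2 m)).fun_pow 2)
    convert h using 1
    · rfl
    · rfl
    simp [Function.update_eq_self, mul_ite]
  have h := ((hsum.const_mul (nrm x.1)).div_const (2 * (η + nrm x.1))).sub_const
      (k / (η + nrm x.1))
  simp only [Ham]
  convert h using 1
  · rfl
  · rfl
  field_simp

noncomputable def DqRL {N : ℕ} (η k : ℝ) (x : (Fin N → ℝ) × (Fin N → ℝ))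
    (a m : Fin N) : ℝ :=
  x.2 a * x.2 m
  + (if a = m then (η * Ham η k x + k) / nrm x.1 - ∑ i, x.2 i ^ 2 else 0)
  + x.1 a * x.1 m *
    (-(η * Ham η k x + k) / nrm x.1 ^ 3
      + η * (η * (∑ i, x.2 i ^ 2) / 2 + k) / ((η + nrm x.1) ^ 2 * nrm x.1 ^ 2))

/-- ∂R_a/∂p_m -/

noncomputable def DpRL {N : ℕ} (η k : ℝ) (x : (Fin N → ℝ) × (Fin N → ℝ))
    (a m : Fin N) : ℝ :=
  x.1 m * x.2 a + (if a = m then ∑ i, x.1 i * x.2 i else 0)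
  + x.1 a * x.2 m * (-2 + η / (η + nrm x.1))

lemma RL_q_hasDerivAt {N : ℕ} (η k : ℝ) (x : (Fin N → ℝ) × (Fin N → ℝ))
    (hq : x.1 ≠ 0) (hd : η + nrm x.1 ≠ 0) (a m : Fin N) :
    HasDerivAt (fun t => RL η k a (Function.update x.1 m t, x.2))
      (DqRL η k x a m) (x.1 m) := by
  have hr := (nrm_pos hq).ne'
  have hval : Function.update x.1 m (x.1 m) = x.1 := Function.update_eq_self m x.1
  have hsum : HasDerivAt
      (fun t => ∑ j, x.2 j * (Function.update x.1 m t j * x.2 a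
        - Function.update x.1 m t a * x.2 j))
      (∑ j, x.2 j * ((if j = m then 1 else 0) * x.2 a
        - (if a = m then 1 else 0) * x.2 j)) (x.1 m) :=
    HasDerivAt.fun_sum fun j _ =>
      (((update_hasDerivAt x.1 m j (x.1 m)).mul_const (x.2 a)).sub
        ((update_hasDerivAt x.1 m a (x.1 m)).mul_const (x.2 j))).const_mul (x.2 j)
  have hn := hasDerivAt_nrm_update hq m
  have ha := update_hasDerivAt x.1 m a (x.1 m)
  have hnne : nrm (Function.update x.1 m (x.1 m)) ≠ 0 := by rw [hval]; exact hr
  have hdiv := ha.div hn hnne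
  have hHam := Ham_q_hasDerivAt η k x hq hd m
  have hA := (hHam.const_mul η).add_const k
  have htot := hsum.add (hdiv.mul hA)
  simp only [RL]
  convert htot using 1
  · rfl
  · rfl
  · rfl
  simp only [hval, Prod.mk.eta, Pi.div_apply]
  have hsv : ∑ j, x.2 j * ((if j = m then 1 else 0) * x.2 a
      - (if a = m then 1 else 0) * x.2 j)
      = x.2 m * x.2 a - (if a = m then 1 else 0) * ∑ j, x.2 j ^ 2 := by
    simp only [mul_sub, Finset.sum_sub_distrib, mul_ite, mul_one, mul_zero, ite_mul,
      zero_mul, Finset.sum_ite_eq', Finset.mem_univ, if_true, Finset.mul_sum,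
      ← Finset.sum_ite_eq]
    congr 1
    · simp [Finset.sum_ite_eq', mul_comm]
    · rcases eq_or_ne a m with h | h <;> simp [h, Finset.mul_sum, pow_two, mul_comm]
  rw [hsv, DqRL]
  rcases eq_or_ne a m with h | h <;>
    · simp only [h, if_true, if_false]
      field_simp
      ring

lemma RL_p_hasDerivAt {N : ℕ} (η k : ℝ) (x : (Fin N → ℝ) × (Fin N → ℝ))
    (hq : x.1 ≠ 0) (hd : η + nrm x.1 ≠ 0) (a m : Fin N) :
    HasDerivAt (fun t => RL η k a (x.1, Function.update x.2 m t))
      (DpRL η k x a m) (x.2 m) := by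
  have hr := (nrm_pos hq).ne'
  have hsum : HasDerivAt
      (fun t => ∑ j, Function.update x.2 m t j * (x.1 j * Function.update x.2 m t a
        - x.1 a * Function.update x.2 m t j))
      (∑ j, ((if j = m then 1 else 0) * (x.1 j * x.2 a - x.1 a * x.2 j)
        + x.2 j * (x.1 j * (if a = m then 1 else 0)
          - x.1 a * (if j = m then 1 else 0)))) (x.2 m) :=
    HasDerivAt.fun_sum fun j _ => by
      simpa [Function.update_eq_self] using
        (update_hasDerivAt x.2 m j (x.2 m)).fun_mul
          (((update_hasDerivAt x.2 m a (x.2 m)).const_mul (x.1 j)).fun_sub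
            ((update_hasDerivAt x.2 m j (x.2 m)).const_mul (x.1 a)))
  have hHam := Ham_p_hasDerivAt η k x hd m
  have hA := ((hHam.const_mul η).add_const k).const_mul (x.1 a / nrm x.1)
  have htot := hsum.add hA
  simp only [RL]
  convert htot using 1
  · rfl
  · rfl
  · rfl
  have hsv : ∑ j, ((if j = m then 1 else 0) * (x.1 j * x.2 a - x.1 a * x.2 j)
      + x.2 j * (x.1 j * (if a = m then 1 else 0)
        - x.1 a * (if j = m then 1 else 0)))
      = (x.1 m * x.2 a - x.1 a * x.2 m)
        + ((if a = m then 1 else 0) * ∑ j, x.1 j * x.2 j) - x.1 a * x.2 m := by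
    simp only [mul_sub, sub_mul, mul_ite, mul_one, mul_zero, ite_mul, zero_mul,
      Finset.sum_add_distrib, Finset.sum_sub_distrib, Finset.sum_ite_eq',
      Finset.mem_univ, if_true, ← Finset.mul_sum]
    rcases eq_or_ne a m with h | h <;> simp [h] <;> ring_nf <;>
      simp [mul_comm, Finset.mul_sum] <;> ring
  rw [hsv, DpRL]
  rcases eq_or_ne a m with h | h <;>
    · simp only [h, if_true, if_false]
      field_simp
      ring

noncomputable def GG {N : ℕ} (η k : ℝ) (x : (Fin N → ℝ) × (Fin N → ℝ)) : ℝ :=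
  (η * Ham η k x + k) / nrm x.1 - ∑ i, x.2 i ^ 2

noncomputable def CC {N : ℕ} (η k : ℝ) (x : (Fin N → ℝ) × (Fin N → ℝ)) : ℝ :=
  -(η * Ham η k x + k) / nrm x.1 ^ 3
    + η * (η * (∑ i, x.2 i ^ 2) / 2 + k) / ((η + nrm x.1) ^ 2 * nrm x.1 ^ 2)

noncomputable def EE {N : ℕ} (η : ℝ) (x : (Fin N → ℝ) × (Fin N → ℝ)) : ℝ :=
  -2 + η / (η + nrm x.1)

lemma DqRL_eq {N : ℕ} (η k : ℝ) (x : (Fin N → ℝ) × (Fin N → ℝ)) (a m : Fin N) :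
    DqRL η k x a m = x.2 a * x.2 m + (if a = m then GG η k x else 0)
      + x.1 a * x.1 m * CC η k x := by
  rw [DqRL, GG, CC]

lemma DpRL_eq {N : ℕ} (η k : ℝ) (x : (Fin N → ℝ) × (Fin N → ℝ)) (a m : Fin N) :
    DpRL η k x a m = x.1 m * x.2 a
      + (if a = m then ∑ l, x.1 l * x.2 l else 0) + x.1 a * x.2 m * EE η x := by
  rw [DpRL, EE]

lemma key1 {N : ℕ} (η k : ℝ) (x : (Fin N → ℝ) × (Fin N → ℝ)) {i j : Fin N}
    (hij : i ≠ j) (m : Fin N) :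
    DqRL η k x i m * DpRL η k x j m - DpRL η k x i m * DqRL η k x j m
      = J i j x * (CC η k x * x.1 m ^ 2 - EE η x * x.2 m ^ 2)
        + ((if i = m then
            GG η k x * (x.1 i * x.2 j + x.1 j * x.2 i * EE η x)
              - (∑ l, x.1 l * x.2 l) * (x.2 i * x.2 j + x.1 i * x.1 j * CC η k x)
          else 0)
        + (if j = m then
            (∑ l, x.1 l * x.2 l) * (x.2 i * x.2 j + x.1 i * x.1 j * CC η k x)
              - GG η k x * (x.1 j * x.2 i + x.1 i * x.2 j * EE η x)
          else 0)) := by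
  rw [DqRL_eq, DqRL_eq, DpRL_eq, DpRL_eq, J]
  rcases eq_or_ne i m with rfl | hi
  · simp only [if_pos rfl, if_neg (Ne.symm hij), if_neg hij, if_true, eq_self_iff_true]
    ring
  · rcases eq_or_ne j m with rfl | hj
    · simp only [if_pos rfl, if_neg hi, if_neg (Ne.symm hi), if_true, eq_self_iff_true]
      ring
    · simp only [if_neg hi, if_neg hj]
      ring

lemma RL_val {N : ℕ} (η k : ℝ) (x : (Fin N → ℝ) × (Fin N → ℝ)) (a : Fin N) :
    RL η k a x = (∑ l, x.1 l * x.2 l) * x.2 a - (∑ l, x.2 l ^ 2) * x.1 a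
      + x.1 a / nrm x.1 * (η * Ham η k x + k) := by
  rw [RL]
  congr 1
  have h : ∀ j, x.2 j * (x.1 j * x.2 a - x.1 a * x.2 j)
      = (x.1 j * x.2 j) * x.2 a - x.2 j ^ 2 * x.1 a := fun j => by ring
  simp only [h, Finset.sum_sub_distrib, Finset.sum_mul]

lemma RR_bracket {N : ℕ} (η k : ℝ) (x : (Fin N → ℝ) × (Fin N → ℝ))
    (hq : x.1 ≠ 0) (hd : η + nrm x.1 ≠ 0) {i j : Fin N} (hij : i ≠ j) :
    ∑ m, (DqRL η k x i m * DpRL η k x j m - DpRL η k x i m * DqRL η k x j m)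
      = -2 * Ham η k x * J i j x := by
  rw [Finset.sum_congr rfl fun m _ => key1 η k x hij m]
  rw [Finset.sum_add_distrib, Finset.sum_add_distrib]
  rw [← Finset.mul_sum, Finset.sum_sub_distrib, ← Finset.mul_sum, ← Finset.mul_sum]
  simp only [Finset.sum_ite_eq, Finset.mem_univ, if_true]
  rw [← nrm_sq x.1]
  have hr := (nrm_pos hq).ne'
  simp only [GG, CC, EE, J, Ham]
  field_simp
  ring

lemma key2 {N : ℕ} (η k : ℝ) (x : (Fin N → ℝ) × (Fin N → ℝ)) (i j m n : Fin N) :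
    ((if i = n then 1 else 0) * x.2 j - (if j = n then 1 else 0) * x.2 i)
        * DpRL η k x m n
      - (x.1 i * (if j = n then 1 else 0) - x.1 j * (if i = n then 1 else 0))
        * DqRL η k x m n
    = (if i = n then x.2 j * DpRL η k x m n + x.1 j * DqRL η k x m n else 0)
      + (if j = n then -(x.2 i * DpRL η k x m n) - x.1 i * DqRL η k x m n
          else 0) := by
  have h : ∀ (P : Prop) [Decidable P] (c : ℝ),
      (if P then c else 0) = (if P then (1:ℝ) else 0) * c := by
    intros P _ c; split <;> simp
  conv_rhs => rw [h (i = n), h (j = n)]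
  ring

lemma JR_final {N : ℕ} (η k : ℝ) (x : (Fin N → ℝ) × (Fin N → ℝ)) (i j m : Fin N) :
    (x.2 j * DpRL η k x m i + x.1 j * DqRL η k x m i)
      + (-(x.2 i * DpRL η k x m j) - x.1 i * DqRL η k x m j)
    = (if i = m then RL η k j x else 0) - (if j = m then RL η k i x else 0) := by
  rw [DqRL_eq, DqRL_eq, DpRL_eq, DpRL_eq]
  rcases eq_or_ne m i with hi | hi <;> rcases eq_or_ne m j with hj | hj
  · rw [if_pos hi, if_pos hi, if_pos hj, if_pos hj, if_pos hi.symm, if_pos hj.symm,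
      RL_val, RL_val, GG]
    ring
  · rw [if_pos hi, if_pos hi, if_neg hj, if_neg hj, if_pos hi.symm, if_neg
      (fun h => hj h.symm), RL_val, GG]
    ring
  · rw [if_neg hi, if_neg hi, if_pos hj, if_pos hj, if_neg (fun h => hi h.symm),
      if_pos hj.symm, RL_val, GG]
    ring
  · rw [if_neg hi, if_neg hi, if_neg hj, if_neg hj, if_neg (fun h => hi h.symm),
      if_neg (fun h => hj h.symm)]
    ring

/-- On the region where H < 0, the Runge–Lenz components and the angular
momenta close the so(N+1) Lie–Poisson algebra: in particular
{R_i, R_j} = −2 H J_{ij} and {J_{ij}, R_k} = δ_{ik}R_j − δ_{jk}R_i. -/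
theorem runge_lenz_soN1 {N : ℕ} (η k : ℝ)
    (x : (Fin N → ℝ) × (Fin N → ℝ)) (hx : x.1 ≠ 0)
    (hH : Ham η k x < 0) :
    (∀ i j : Fin N,
      pbracket (RL η k i) (RL η k j) x = -2 * Ham η k x * J i j x) ∧
    (∀ i j m : Fin N,
      pbracket (J i j) (RL η k m) x =
        (if i = m then RL η k j x else 0) -
        (if j = m then RL η k i x else 0)) := by
  have hd : η + nrm x.1 ≠ 0 := by
    intro h
    rw [Ham, h] at hH
    norm_num at hH
  have eq1 : ∀ a n, deriv (fun t => RL η k a (Function.update x.1 n t, x.2)) (x.1 n)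
      = DqRL η k x a n := fun a n => (RL_q_hasDerivAt η k x hx hd a n).deriv
  have eq2 : ∀ a n, deriv (fun t => RL η k a (x.1, Function.update x.2 n t)) (x.2 n)
      = DpRL η k x a n := fun a n => (RL_p_hasDerivAt η k x hx hd a n).deriv
  constructor
  · intro i j
    rcases eq_or_ne i j with rfl | hij
    · rw [pbracket, Finset.sum_eq_zero fun m _ => by ring]
      simp [J]
    · rw [pbracket]
      simp only [eq1, eq2]
      exact RR_bracket η k x hx hd hij
  · intro i j m
    have eq3 : ∀ n, deriv (fun t => J i j (Function.update x.1 n t, x.2)) (x.1 n)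
        = (if i = n then 1 else 0) * x.2 j - (if j = n then 1 else 0) * x.2 i :=
      fun n => (((update_hasDerivAt x.1 n i (x.1 n)).mul_const (x.2 j)).sub
        ((update_hasDerivAt x.1 n j (x.1 n)).mul_const (x.2 i))).deriv
    have eq4 : ∀ n, deriv (fun t => J i j (x.1, Function.update x.2 n t)) (x.2 n)
        = x.1 i * (if j = n then 1 else 0) - x.1 j * (if i = n then 1 else 0) :=
      fun n => (((update_hasDerivAt x.2 n j (x.2 n)).const_mul (x.1 i)).sub
        ((update_hasDerivAt x.2 n i (x.2 n)).const_mul (x.1 j))).deriv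
    rw [pbracket]
    simp only [eq1, eq2, eq3, eq4]
    rw [Finset.sum_congr rfl fun n _ => key2 η k x i j m n]
    rw [Finset.sum_add_distrib]
    simp only [Finset.sum_ite_eq, Finset.mem_univ, if_true]
    exact JR_final η k x i j m
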